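/- For $b_0 = \frac{\log 2}{2}\cdot\frac{n}{\log n}$, the sum $\sum_{k=1}^{\lfloor n/2\rfloor} \binom{n}{k} 2^{-k(n-k)/b_0}$ tends to $0$ as $n\to\infty$. -/

import Mathlib

open Filter Topology

lemma aux_choose_le_two_pow (n k : ℕ) : n.choose k ≤ 2 ^ n := by
  rcases le_or_gt k n with h | h
  · calc n.choose k ≤ ∑ m ∈ Finset.range (n + 1), n.choose m :=
        Finset.single_le_sum (fun i _ => Nat.zero_le _)
          (Finset.mem_range.2 (Nat.lt_succ_of_le h))
    _ = 2 ^ n := Nat.sum_range_choose n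
  · simp [Nat.choose_eq_zero_of_lt h]

lemma aux_base_change {n k : ℕ} (hn : 2 ≤ n) (hk : k ≤ n) :
    (2 : ℝ) ^ (-((k * (n - k) : ℕ) : ℝ) / (Real.log 2 / 2 * ((n : ℝ) / Real.log n)))
      = (n : ℝ) ^ (-(2 * (k : ℝ) * ((n : ℝ) - (k : ℝ)) / (n : ℝ))) := by
  have hn0 : (0 : ℝ) < n := by positivity
  have hlogn : 0 < Real.log n := Real.log_pos (by exact_mod_cast hn)
  have hlog2 : 0 < Real.log 2 := Real.log_pos (by norm_num)
  rw [Real.rpow_def_of_pos (by norm_num : (0:ℝ) < 2), Real.rpow_def_of_pos hn0]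
  congr 1
  have hcast : ((k * (n - k) : ℕ) : ℝ) = (k : ℝ) * ((n : ℝ) - (k : ℝ)) := by
    push_cast [Nat.cast_sub hk]
    ring
  rw [hcast]
  field_simp

lemma aux_term_le {n k : ℕ} (hn : 256 ≤ n) (hk1 : 1 ≤ k) (hk2 : k ≤ n / 2) :
    (n.choose k : ℝ) * (n : ℝ) ^ (-(2 * (k : ℝ) * ((n : ℝ) - (k : ℝ)) / (n : ℝ)))
      ≤ ((n : ℝ) ^ (-(1/2) : ℝ)) ^ k + (1/2 : ℝ) ^ n := by
  have hn0 : (0 : ℝ) < n := by positivity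
  have hn1 : (1 : ℝ) ≤ n := by exact_mod_cast (by omega : 1 ≤ n)
  have hk2' : 2 * (k : ℝ) ≤ n := by
    have : 2 * k ≤ n := by omega
    exact_mod_cast this
  have hk0 : (0 : ℝ) < k := by exact_mod_cast hk1
  rcases le_or_gt (4 * (k : ℝ)) (n : ℝ) with hA | hB
  · -- small k : term ≤ (n ^ (-1/2))^k
    have hC : (n.choose k : ℝ) ≤ (n : ℝ) ^ (k : ℕ) := by
      exact_mod_cast Nat.choose_le_pow n k
    have hexp : -(2 * (k : ℝ) * ((n : ℝ) - (k : ℝ)) / (n : ℝ)) ≤ -(3/2 * (k : ℝ)) := by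
      rw [neg_le_neg_iff, le_div_iff₀ hn0]
      nlinarith
    have hmono := Real.rpow_le_rpow_of_exponent_le hn1 hexp
    have key : (n.choose k : ℝ) * (n : ℝ) ^ (-(2 * (k : ℝ) * ((n : ℝ) - (k : ℝ)) / (n : ℝ)))
        ≤ (n : ℝ) ^ (k : ℕ) * (n : ℝ) ^ (-(3/2 * (k : ℝ)) : ℝ) :=
      mul_le_mul hC hmono (Real.rpow_nonneg hn0.le _) (by positivity)
    refine key.trans ?_
    have heq : (n : ℝ) ^ (k : ℕ) * (n : ℝ) ^ (-(3/2 * (k : ℝ)) : ℝ)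
        = ((n : ℝ) ^ (-(1/2) : ℝ)) ^ k := by
      rw [← Real.rpow_natCast (n : ℝ) k, ← Real.rpow_add hn0,
        ← Real.rpow_natCast ((n : ℝ) ^ (-(1/2) : ℝ)) k, ← Real.rpow_mul hn0.le]
      congr 1
      ring
    rw [heq]
    have : (0 : ℝ) ≤ (1/2 : ℝ) ^ n := by positivity
    linarith
  · -- large k : term ≤ (1/2)^n
    have hC : (n.choose k : ℝ) ≤ (2 : ℝ) ^ n := by
      exact_mod_cast aux_choose_le_two_pow n k
    have hexp : -(2 * (k : ℝ) * ((n : ℝ) - (k : ℝ)) / (n : ℝ)) ≤ -((n : ℝ) / 4) := by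
      rw [neg_le_neg_iff, div_le_div_iff₀ (by norm_num) hn0]
      nlinarith
    have hmono := Real.rpow_le_rpow_of_exponent_le hn1 hexp
    have h4 : (4 : ℝ) ≤ (n : ℝ) ^ (1/4 : ℝ) := by
      have h256 : ((256 : ℝ)) ≤ (n : ℝ) := by exact_mod_cast hn
      have hle : ((256 : ℝ)) ^ (1/4 : ℝ) ≤ (n : ℝ) ^ (1/4 : ℝ) :=
        Real.rpow_le_rpow (by norm_num) h256 (by norm_num)
      have h4eq : ((256 : ℝ)) ^ (1/4 : ℝ) = 4 := by
        rw [show (256 : ℝ) = (4 : ℝ) ^ (4 : ℕ) by norm_num, ← Real.rpow_natCast,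
          ← Real.rpow_mul (by norm_num : (0:ℝ) ≤ 4)]
        norm_num
      linarith
    have hquarter : (n : ℝ) ^ (-((n : ℝ) / 4)) ≤ (1/4 : ℝ) ^ n := by
      have heq : (n : ℝ) ^ (-((n : ℝ) / 4)) = (((n : ℝ) ^ (1/4 : ℝ)) ^ n)⁻¹ := by
        rw [← Real.rpow_natCast ((n : ℝ) ^ (1/4 : ℝ)) n, ← Real.rpow_mul hn0.le,
          ← Real.rpow_neg hn0.le]
        congr 1
        push_cast
        ring
      rw [heq]
      have h1 : (4 : ℝ) ^ n ≤ ((n : ℝ) ^ (1/4 : ℝ)) ^ n :=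
        pow_le_pow_left₀ (by norm_num) h4 n
      have h2 : (0 : ℝ) < (4 : ℝ) ^ n := by positivity
      rw [show ((1:ℝ)/4) ^ n = ((4:ℝ) ^ n)⁻¹ by rw [← inv_pow]; norm_num]
      exact inv_anti₀ h2 h1
    have key : (n.choose k : ℝ) * (n : ℝ) ^ (-(2 * (k : ℝ) * ((n : ℝ) - (k : ℝ)) / (n : ℝ)))
        ≤ (2 : ℝ) ^ n * (1/4 : ℝ) ^ n :=
      mul_le_mul hC (hmono.trans hquarter) (Real.rpow_nonneg hn0.le _) (by positivity)
    refine key.trans ?_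
    have h2eq : (2 : ℝ) ^ n * (1/4 : ℝ) ^ n = (1/2 : ℝ) ^ n := by
      rw [← mul_pow]
      norm_num
    rw [h2eq]
    have : (0 : ℝ) ≤ ((n : ℝ) ^ (-(1/2) : ℝ)) ^ k := by positivity
    linarith

lemma aux_geom_sum (n m : ℕ) (hn : 4 ≤ n) :
    ∑ k ∈ Finset.Icc 1 m, ((n : ℝ) ^ (-(1/2) : ℝ)) ^ k ≤ 2 * (n : ℝ) ^ (-(1/2) : ℝ) := by
  have hn0 : (0 : ℝ) < n := by positivity
  set r : ℝ := (n : ℝ) ^ (-(1/2) : ℝ) with hr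
  have hr0 : 0 ≤ r := Real.rpow_nonneg hn0.le _
  have hrhalf : r ≤ 1/2 := by
    have h4 : ((4 : ℝ)) ^ (-(1/2) : ℝ) = 1/2 := by
      rw [show (4 : ℝ) = (2 : ℝ) ^ (2 : ℕ) by norm_num, ← Real.rpow_natCast,
        ← Real.rpow_mul (by norm_num : (0:ℝ) ≤ 2)]
      norm_num [Real.rpow_neg_one]
    have : (n : ℝ) ^ (-(1/2) : ℝ) ≤ (4 : ℝ) ^ (-(1/2) : ℝ) :=
      Real.rpow_le_rpow_of_nonpos (by norm_num) (by exact_mod_cast hn) (by norm_num)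
    rw [hr]
    linarith [h4 ▸ this]
  calc ∑ k ∈ Finset.Icc 1 m, r ^ k
      ≤ ∑ k ∈ Finset.Icc 1 m, r * (1/2 : ℝ) ^ (k - 1) := by
        apply Finset.sum_le_sum
        intro k hk
        obtain ⟨hk1, _⟩ := Finset.mem_Icc.mp hk
        calc r ^ k = r * r ^ (k - 1) := by
              rw [← pow_succ']
              congr 1
              omega
          _ ≤ r * (1/2 : ℝ) ^ (k - 1) := by
              apply mul_le_mul_of_nonneg_left _ hr0
              exact pow_le_pow_left₀ hr0 hrhalf _
    _ = r * ∑ k ∈ Finset.Icc 1 m, (1/2 : ℝ) ^ (k - 1) := by rw [Finset.mul_sum]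
    _ ≤ r * 2 := by
        apply mul_le_mul_of_nonneg_left _ hr0
        have : ∑ k ∈ Finset.Icc 1 m, (1/2 : ℝ) ^ (k - 1)
            = ∑ i ∈ Finset.range m, (1/2 : ℝ) ^ i := by
          rw [← Finset.Ico_add_one_right_eq_Icc, Finset.sum_Ico_eq_sum_range]
          simp
        rw [this]
        exact sum_geometric_two_le m
    _ = 2 * r := by ring

/-- For `b₀ = (log 2 / 2) · n / log n`, the Erdős–Selfridge potential of the family
of edge-cuts of `K_n`, `∑_{k=1}^{⌊n/2⌋} C(n,k) 2^{-k(n-k)/b₀}`, tends to `0`. -/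
theorem stmt11 :
    Tendsto (fun n : ℕ => ∑ k ∈ Finset.Icc 1 (n / 2),
      (n.choose k : ℝ) *
        (2 : ℝ) ^ (-((k * (n - k) : ℕ) : ℝ) / (Real.log 2 / 2 * ((n : ℝ) / Real.log n))))
      atTop (nhds 0) := by
  have hg : Tendsto (fun n : ℕ => 2 * (n : ℝ) ^ (-(1/2) : ℝ) + (n : ℝ) * (1/2 : ℝ) ^ n)
      atTop (𝓝 0) := by
    have h1 : Tendsto (fun n : ℕ => (n : ℝ) ^ (-(1/2) : ℝ)) atTop (𝓝 0) :=
      (tendsto_rpow_neg_atTop (by norm_num : (0:ℝ) < 1/2)).comp tendsto_natCast_atTop_atTop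
    have h2 : Tendsto (fun n : ℕ => (n : ℝ) * (1/2 : ℝ) ^ n) atTop (𝓝 0) := by
      have := tendsto_pow_const_mul_const_pow_of_lt_one 1 (by norm_num : (0:ℝ) ≤ 1/2)
        (by norm_num : (1/2 : ℝ) < 1)
      simpa using this
    have := (h1.const_mul 2).add h2
    simpa using this
  apply squeeze_zero'
  · filter_upwards with n
    apply Finset.sum_nonneg
    intro k _
    have : (0:ℝ) ≤ (2 : ℝ) ^ (-((k * (n - k) : ℕ) : ℝ) /
        (Real.log 2 / 2 * ((n : ℝ) / Real.log n))) := Real.rpow_nonneg (by norm_num) _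
    positivity
  · filter_upwards [eventually_ge_atTop 256] with n hn
    calc ∑ k ∈ Finset.Icc 1 (n / 2), (n.choose k : ℝ) *
          (2 : ℝ) ^ (-((k * (n - k) : ℕ) : ℝ) / (Real.log 2 / 2 * ((n : ℝ) / Real.log n)))
        ≤ ∑ k ∈ Finset.Icc 1 (n / 2), (((n : ℝ) ^ (-(1/2) : ℝ)) ^ k + (1/2 : ℝ) ^ n) := by
          apply Finset.sum_le_sum
          intro k hk
          obtain ⟨hk1, hk2⟩ := Finset.mem_Icc.mp hk
          rw [aux_base_change (by omega) (by omega)]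
          exact aux_term_le hn hk1 hk2
      _ = (∑ k ∈ Finset.Icc 1 (n / 2), ((n : ℝ) ^ (-(1/2) : ℝ)) ^ k)
            + (n / 2 : ℕ) * (1/2 : ℝ) ^ n := by
          rw [Finset.sum_add_distrib, Finset.sum_const, Nat.card_Icc]
          simp [nsmul_eq_mul]
      _ ≤ 2 * (n : ℝ) ^ (-(1/2) : ℝ) + (n : ℝ) * (1/2 : ℝ) ^ n := by
          have hA := aux_geom_sum n (n / 2) (by omega)
          have hB : ((n / 2 : ℕ) : ℝ) ≤ (n : ℝ) := by
            exact_mod_cast Nat.div_le_self n 2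
          have hpos : (0:ℝ) ≤ (1/2 : ℝ) ^ n := by positivity
          have := mul_le_mul_of_nonneg_right hB hpos
          linarith
  · exact hg
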